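/- Let f : S^{n-1} → (0,∞) be continuous, φ : (0,∞) → (0,∞) continuous, and set φ̃(s) = ∫₀^s 1/φ(t) dt, assumed finite for all s > 0 with lim_{s→∞} φ̃(s) = ∞. Suppose a family of positive continuous functions h(·,t) on S^{n-1} satisfies ∫_{S^{n-1}} φ̃(h(ξ,t))/f(ξ) dξ = R for all t (a fixed constant), and the maximum ħ(t) = max_ξ h(ξ,t) is attained at ξ_t with h(ξ,t) ≥ ħ(t)·(ξ_t·ξ)⁺. Then there exists a constant L, depending only on R, f, and φ̃ (not on t), such that ħ(t) ≤ L for all t. -/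

import Mathlib

open MeasureTheory Metric
open scoped RealInnerProductSpace ENNReal NNReal

private lemma sqrt_lip {u v : ℝ} (hu : 1/4 ≤ u) (hv : 1/4 ≤ v) :
    |Real.sqrt u - Real.sqrt v| ≤ |u - v| := by
  have h1 : (1:ℝ)/2 ≤ Real.sqrt u := by
    rw [show (1:ℝ)/2 = Real.sqrt (1/4) by rw [show (1:ℝ)/4 = (1/2)^2 by norm_num, Real.sqrt_sq]; norm_num]
    exact Real.sqrt_le_sqrt hu
  have h2 : (1:ℝ)/2 ≤ Real.sqrt v := by
    rw [show (1:ℝ)/2 = Real.sqrt (1/4) by rw [show (1:ℝ)/4 = (1/2)^2 by norm_num, Real.sqrt_sq]; norm_num]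
    exact Real.sqrt_le_sqrt hv
  have key : (Real.sqrt u - Real.sqrt v) * (Real.sqrt u + Real.sqrt v) = u - v := by
    have := Real.sq_sqrt (by linarith : (0:ℝ) ≤ u)
    have := Real.sq_sqrt (by linarith : (0:ℝ) ≤ v)
    ring_nf
    nlinarith [Real.sq_sqrt (by linarith : (0:ℝ) ≤ u), Real.sq_sqrt (by linarith : (0:ℝ) ≤ v)]
  have hsum : 1 ≤ Real.sqrt u + Real.sqrt v := by linarith
  calc |Real.sqrt u - Real.sqrt v| ≤ |Real.sqrt u - Real.sqrt v| * (Real.sqrt u + Real.sqrt v) := by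
        nlinarith [abs_nonneg (Real.sqrt u - Real.sqrt v)]
    _ = |u - v| := by rw [← abs_of_nonneg (by linarith : (0:ℝ) ≤ Real.sqrt u + Real.sqrt v), ← abs_mul, key]

set_option maxHeartbeats 1000000 in
lemma cap_lemma {n : ℕ} (hn : 2 ≤ n) :
    ∃ c : ℝ≥0∞, 0 < c ∧ c ≠ ⊤ ∧
      (∀ v ∈ sphere (0 : EuclideanSpace ℝ (Fin n)) 1,
        μH[(n:ℝ)-1] (sphere (0 : EuclideanSpace ℝ (Fin n)) 1 ∩ {ξ | 1/2 ≤ ⟪v, ξ⟫}) = c) ∧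
      μH[(n:ℝ)-1] (sphere (0 : EuclideanSpace ℝ (Fin n)) 1) ≠ ⊤ := by
  set d : ℝ := (n:ℝ) - 1 with hdd
  have hd : 0 ≤ d := by simp [hdd]; exact_mod_cast Nat.one_le_of_lt hn
  set S := sphere (0 : EuclideanSpace ℝ (Fin n)) 1 with hS
  set cap : EuclideanSpace ℝ (Fin n) → Set (EuclideanSpace ℝ (Fin n)) :=
    fun v => S ∩ {ξ | 1/2 ≤ ⟪v, ξ⟫} with hcap
  -- rotation invariance
  have hrot : ∀ u ∈ S, ∀ v ∈ S, μH[d] (cap u) = μH[d] (cap v) := by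
    intro u hu v hv
    have huv : ‖u‖ = ‖v‖ := by
      rw [mem_sphere_iff_norm, sub_zero] at hu hv; rw [hu, hv]
    set e := Submodule.reflection (ℝ ∙ (u - v))ᗮ with he
    have heu : e u = v := Submodule.reflection_sub huv
    have himg : cap v = e '' cap u := by
      ext ξ
      constructor
      · rintro ⟨hξS, hξc⟩
        refine ⟨e.symm ξ, ⟨?_, ?_⟩, by simp⟩
        · rw [hS, mem_sphere_iff_norm, sub_zero] at hξS ⊢
          rw [LinearIsometryEquiv.norm_map]; exact hξS
        · show 1/2 ≤ ⟪u, e.symm ξ⟫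
          have : ⟪e u, e (e.symm ξ)⟫ = ⟪u, e.symm ξ⟫ := e.inner_map_map u (e.symm ξ)
          rw [heu, LinearIsometryEquiv.apply_symm_apply] at this
          rw [← this]; exact hξc
      · rintro ⟨η, ⟨hηS, hηc⟩, rfl⟩
        refine ⟨?_, ?_⟩
        · rw [hS, mem_sphere_iff_norm, sub_zero] at hηS ⊢
          rw [LinearIsometryEquiv.norm_map]; exact hηS
        · show 1/2 ≤ ⟪v, e η⟫
          rw [← heu, e.inner_map_map]; exact hηc
    rw [himg]
    exact (e.toIsometryEquiv.hausdorffMeasure_image d (cap u)).symm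
  -- the distinguished point and hyperplane
  set e₀ : EuclideanSpace ℝ (Fin n) := EuclideanSpace.single ⟨0, by omega⟩ 1 with he₀
  have hne₀ : ‖e₀‖ = 1 := by simp [he₀, EuclideanSpace.norm_single]
  have he₀S : e₀ ∈ S := by rw [hS, mem_sphere_iff_norm, sub_zero]; exact hne₀
  have he₀0 : e₀ ≠ 0 := norm_ne_zero_iff.mp (by rw [hne₀]; norm_num)
  have hee : ⟪e₀, e₀⟫ = 1 := by
    rw [real_inner_self_eq_norm_sq, hne₀]; norm_num
  set H := (ℝ ∙ e₀)ᗮ with hH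
  have hfr : (Module.finrank ℝ H : ℝ) = d := by
    haveI : Fact (Module.finrank ℝ (EuclideanSpace ℝ (Fin n)) = (n-1) + 1) :=
      ⟨by simp only [finrank_euclideanSpace_fin]; omega⟩
    have h2 := Submodule.finrank_orthogonal_span_singleton (𝕜 := ℝ) (n := n - 1) (v := e₀) he₀0
    rw [hH, h2, hdd]
    have : (1:ℕ) ≤ n := by omega
    push_cast [Nat.cast_sub this]
    ring
  -- the Haar instance on H, with index d
  haveI hHaar : (μH[d] : Measure H).IsAddHaarMeasure := by
    rw [← hfr]; exact isAddHaarMeasure_hausdorffMeasure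
  set r : ℝ := Real.sqrt (3/4) with hr
  have hrpos : 0 < r := Real.sqrt_pos.mpr (by norm_num)
  set D : Set (EuclideanSpace ℝ (Fin n)) := Subtype.val '' (closedBall (0 : H) r) with hD
  have hμD : μH[d] D = μH[d] (closedBall (0 : H) r) :=
    (isometry_subtype_coe).hausdorffMeasure_image (Or.inl hd) _
  have hμDpos : 0 < μH[d] D := by
    rw [hμD]
    calc (0:ℝ≥0∞) < μH[d] (ball (0:H) r) := measure_ball_pos _ _ hrpos
      _ ≤ μH[d] (closedBall (0:H) r) := measure_mono ball_subset_closedBall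
  have hμDfin : μH[d] D < ⊤ := by
    rw [hμD]
    exact (isCompact_closedBall _ _).measure_lt_top
  -- membership description of D
  have hDdesc : D = {x : EuclideanSpace ℝ (Fin n) | x ∈ H ∧ ‖x‖ ≤ r} := by
    ext x
    constructor
    · rintro ⟨y, hy, rfl⟩
      exact ⟨y.2, by simpa [mem_closedBall, dist_eq_norm] using hy⟩
    · rintro ⟨hxH, hxr⟩
      exact ⟨⟨x, hxH⟩, by simpa [mem_closedBall, dist_eq_norm], rfl⟩
  have hr2 : r^2 = 3/4 := Real.sq_sqrt (by norm_num)
  have hr1 : r ≤ 1 := by nlinarith [hrpos]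
  -- the two maps
  set P : EuclideanSpace ℝ (Fin n) → EuclideanSpace ℝ (Fin n) :=
    fun x => x - ⟪e₀, x⟫ • e₀ with hP
  set F : EuclideanSpace ℝ (Fin n) → EuclideanSpace ℝ (Fin n) :=
    fun x => Real.sqrt (1 - ‖x‖^2) • e₀ + x with hF
  have normPsq : ∀ z : EuclideanSpace ℝ (Fin n),
      ‖z - ⟪e₀, z⟫ • e₀‖^2 = ‖z‖^2 - ⟪e₀, z⟫^2 := by
    intro z
    have h1 : ‖z - ⟪e₀, z⟫ • e₀‖^2 = ‖z‖^2 - 2 * ⟪z, ⟪e₀, z⟫ • e₀⟫ + ‖⟪e₀, z⟫ • e₀‖^2 :=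
      norm_sub_sq_real z _
    have h2 : ⟪z, ⟪e₀, z⟫ • e₀⟫ = ⟪e₀, z⟫ * ⟪z, e₀⟫ := real_inner_smul_right z e₀ _
    have h3 : ⟪z, e₀⟫ = ⟪e₀, z⟫ := real_inner_comm e₀ z
    have h4 : ‖⟪e₀, z⟫ • e₀‖^2 = ⟪e₀, z⟫^2 := by
      rw [norm_smul, mul_pow, hne₀]
      simp [sq_abs]
    rw [h1, h2, h3, h4]; ring
  have Pcontract : ∀ z : EuclideanSpace ℝ (Fin n), ‖z - ⟪e₀, z⟫ • e₀‖ ≤ ‖z‖ := by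
    intro z
    have := normPsq z
    nlinarith [norm_nonneg (z - ⟪e₀, z⟫ • e₀), norm_nonneg z, sq_nonneg ⟪e₀, z⟫]
  have LipP : LipschitzWith 1 P := by
    apply LipschitzWith.of_dist_le_mul
    intro x y
    have hsub : P x - P y = (x - y) - ⟪e₀, x - y⟫ • e₀ := by
      simp only [hP, inner_sub_right, sub_smul]
      abel
    rw [dist_eq_norm, dist_eq_norm, hsub]
    simp only [NNReal.coe_one, one_mul]
    exact Pcontract (x - y)
  have LipF : LipschitzOnWith 3 F D := by
    apply LipschitzOnWith.of_dist_le_mul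
    intro x hx y hy
    rw [hDdesc] at hx hy
    obtain ⟨-, hxr⟩ := hx
    obtain ⟨-, hyr⟩ := hy
    set sx := Real.sqrt (1 - ‖x‖^2)
    set sy := Real.sqrt (1 - ‖y‖^2)
    have hxs : 1/4 ≤ 1 - ‖x‖^2 := by nlinarith [norm_nonneg x]
    have hys : 1/4 ≤ 1 - ‖y‖^2 := by nlinarith [norm_nonneg y]
    have hdiff : |sx - sy| ≤ |(1 - ‖x‖^2) - (1 - ‖y‖^2)| := sqrt_lip hxs hys
    have hsq : |(1 - ‖x‖^2) - (1 - ‖y‖^2)| ≤ 2 * ‖x - y‖ := by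
      have h5 : |(1 - ‖x‖^2) - (1 - ‖y‖^2)| = |‖y‖ - ‖x‖| * (‖y‖ + ‖x‖) := by
        rw [← abs_of_nonneg (by positivity : (0:ℝ) ≤ ‖y‖ + ‖x‖), ← abs_mul]
        ring_nf
      have h6 : |‖y‖ - ‖x‖| ≤ ‖x - y‖ := by
        rw [abs_sub_comm]
        simpa [dist_eq_norm] using abs_norm_sub_norm_le x y
      have h7 : ‖y‖ + ‖x‖ ≤ 2 := by nlinarith
      calc |(1 - ‖x‖^2) - (1 - ‖y‖^2)| = |‖y‖ - ‖x‖| * (‖y‖ + ‖x‖) := h5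
        _ ≤ ‖x - y‖ * 2 := by
            apply mul_le_mul h6 h7 (by positivity) (norm_nonneg _)
        _ = 2 * ‖x - y‖ := by ring
    have hFxy : F x - F y = (sx - sy) • e₀ + (x - y) := by
      simp only [hF, sub_smul]
      abel
    have h3co : ((3:ℝ≥0):ℝ) = (3:ℝ) := by norm_num
    rw [dist_eq_norm, dist_eq_norm, hFxy, h3co]
    calc ‖(sx - sy) • e₀ + (x - y)‖ ≤ ‖(sx - sy) • e₀‖ + ‖x - y‖ := norm_add_le _ _
      _ = |sx - sy| + ‖x - y‖ := by rw [norm_smul, hne₀, mul_one, Real.norm_eq_abs]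
      _ ≤ 2 * ‖x - y‖ + ‖x - y‖ := by linarith [hdiff.trans hsq]
      _ = (3:ℝ) * ‖x - y‖ := by ring
  -- cap e₀ ⊆ F '' D
  have capFD : cap e₀ ⊆ F '' D := by
    rintro ξ ⟨hξS, hξc⟩
    have hc : 1/2 ≤ ⟪e₀, ξ⟫ := hξc
    have hξ1 : ‖ξ‖ = 1 := by rwa [hS, mem_sphere_iff_norm, sub_zero] at hξS
    have hc1 : ⟪e₀, ξ⟫ ≤ 1 := by
      calc ⟪e₀, ξ⟫ ≤ ‖e₀‖ * ‖ξ‖ := real_inner_le_norm e₀ ξ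
        _ = 1 := by rw [hne₀, hξ1, mul_one]
    set x := ξ - ⟪e₀, ξ⟫ • e₀ with hx
    have hxH : x ∈ H := by
      rw [hH, Submodule.mem_orthogonal_singleton_iff_inner_right]
      rw [hx, inner_sub_right, real_inner_smul_right, hee]
      ring
    have hxn : ‖x‖^2 = 1 - ⟪e₀, ξ⟫^2 := by
      rw [hx, normPsq ξ, hξ1]; ring
    have hxr : ‖x‖ ≤ r := by
      have : ‖x‖^2 ≤ r^2 := by rw [hxn, hr2]; nlinarith
      nlinarith [norm_nonneg x, hrpos]
    refine ⟨x, ?_, ?_⟩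
    · rw [hDdesc]; exact ⟨hxH, hxr⟩
    · show Real.sqrt (1 - ‖x‖^2) • e₀ + x = ξ
      have : Real.sqrt (1 - ‖x‖^2) = ⟪e₀, ξ⟫ := by
        rw [hxn, show 1 - (1 - ⟪e₀, ξ⟫^2) = ⟪e₀, ξ⟫^2 by ring,
          Real.sqrt_sq (by linarith)]
      rw [this, hx]
      abel
  -- D ⊆ P '' cap e₀
  have DPc : D ⊆ P '' (cap e₀) := by
    intro x hx
    rw [hDdesc] at hx
    obtain ⟨hxH, hxr⟩ := hx
    have hxinner : ⟪e₀, x⟫ = 0 := by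
      rw [hH, Submodule.mem_orthogonal_singleton_iff_inner_right] at hxH
      exact hxH
    have hxn2 : ‖x‖^2 ≤ 3/4 := by nlinarith [norm_nonneg x]
    set s := Real.sqrt (1 - ‖x‖^2) with hs
    have hs2 : s^2 = 1 - ‖x‖^2 := Real.sq_sqrt (by nlinarith [norm_nonneg x])
    have hshalf : 1/2 ≤ s := by
      rw [hs]
      rw [show (1:ℝ)/2 = Real.sqrt (1/4) by
        rw [show (1:ℝ)/4 = (1/2)^2 by norm_num, Real.sqrt_sq]; norm_num]
      exact Real.sqrt_le_sqrt (by linarith)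
    set ξ := s • e₀ + x with hξ
    have hinner : ⟪e₀, ξ⟫ = s := by
      rw [hξ, inner_add_right, real_inner_smul_right, hee, hxinner]
      ring
    have hξn : ‖ξ‖ = 1 := by
      have h1 : ‖ξ‖^2 = ‖s • e₀‖^2 + 2 * ⟪s • e₀, x⟫ + ‖x‖^2 := norm_add_sq_real _ _
      have h2 : ⟪s • e₀, x⟫ = s * ⟪e₀, x⟫ := real_inner_smul_left e₀ x s
      have h3 : ‖s • e₀‖^2 = s^2 := by
        rw [norm_smul, mul_pow, hne₀]; simp [sq_abs]
      have : ‖ξ‖^2 = 1 := by rw [h1, h2, h3, hxinner, hs2]; ring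
      nlinarith [norm_nonneg ξ]
    have hξcap : ξ ∈ cap e₀ := by
      refine ⟨?_, ?_⟩
      · rw [hS, mem_sphere_iff_norm, sub_zero]; exact hξn
      · show 1/2 ≤ ⟪e₀, ξ⟫
        rw [hinner]; exact hshalf
    refine ⟨ξ, hξcap, ?_⟩
    show ξ - ⟪e₀, ξ⟫ • e₀ = x
    rw [hinner, hξ]
    abel
  -- measure bounds for cap e₀
  have hcapfin : μH[d] (cap e₀) < ⊤ := by
    calc μH[d] (cap e₀) ≤ μH[d] (F '' D) := measure_mono capFD
      _ ≤ (3:ℝ≥0∞)^d * μH[d] D := by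
          simpa using LipF.hausdorffMeasure_image_le hd
      _ < ⊤ := ENNReal.mul_lt_top (ENNReal.rpow_lt_top_of_nonneg hd (by norm_num)) hμDfin
  have hcappos : 0 < μH[d] (cap e₀) := by
    have h1 : μH[d] D ≤ μH[d] (P '' (cap e₀)) := measure_mono DPc
    have h2 : μH[d] (P '' (cap e₀)) ≤ (1:ℝ≥0∞)^d * μH[d] (cap e₀) := by
      simpa using LipP.hausdorffMeasure_image_le hd (cap e₀)
    rw [ENNReal.one_rpow, one_mul] at h2
    exact lt_of_lt_of_le hμDpos (h1.trans h2)
  -- finiteness of the sphere measure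
  have hSfin : μH[d] S ≠ ⊤ := by
    set U : S → Set (EuclideanSpace ℝ (Fin n)) := fun v => {x | 1/2 < ⟪v.1, x⟫} with hU
    have hUopen : ∀ v : S, IsOpen (U v) := by
      intro v
      exact isOpen_lt continuous_const (Continuous.inner continuous_const continuous_id)
    have hcover : S ⊆ ⋃ v : S, U v := by
      intro ξ hξ
      refine Set.mem_iUnion.mpr ⟨⟨ξ, hξ⟩, ?_⟩
      show 1/2 < ⟪ξ, ξ⟫
      rw [real_inner_self_eq_norm_sq]
      rw [hS, mem_sphere_iff_norm, sub_zero] at hξ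
      rw [hξ]; norm_num
    obtain ⟨t, ht⟩ := (isCompact_sphere (0 : EuclideanSpace ℝ (Fin n)) 1).elim_finite_subcover
      U hUopen (by rw [← hS] at *; exact hcover)
    have hsum : μH[d] S ≤ ∑ v ∈ t, μH[d] (cap v.1) := by
      calc μH[d] S ≤ μH[d] (⋃ v ∈ t, S ∩ U v) := by
            apply measure_mono
            intro ξ hξ
            obtain ⟨v, hv, hvU⟩ := Set.mem_iUnion₂.mp (ht hξ)
            exact Set.mem_iUnion₂.mpr ⟨v, hv, hξ, hvU⟩
        _ ≤ ∑ v ∈ t, μH[d] (S ∩ U v) := measure_biUnion_finset_le _ _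
        _ ≤ ∑ v ∈ t, μH[d] (cap v.1) := by
            apply Finset.sum_le_sum
            intro v _
            apply measure_mono
            rintro ξ ⟨hξS, hξU⟩
            refine ⟨hξS, ?_⟩
            show (1:ℝ)/2 ≤ ⟪v.1, ξ⟫
            exact le_of_lt hξU
    have heach : ∀ v : S, μH[d] (cap v.1) = μH[d] (cap e₀) := fun v => hrot v.1 v.2 e₀ he₀S
    have : μH[d] S ≤ (t.card : ℝ≥0∞) * μH[d] (cap e₀) := by
      calc μH[d] S ≤ ∑ v ∈ t, μH[d] (cap v.1) := hsum
        _ = ∑ _v ∈ t, μH[d] (cap e₀) := Finset.sum_congr rfl (fun v _ => heach v)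
        _ = (t.card : ℝ≥0∞) * μH[d] (cap e₀) := by
            rw [Finset.sum_const, nsmul_eq_mul]
    exact ne_top_of_le_ne_top
      (ENNReal.mul_lt_top (by simp [ENNReal.natCast_lt_top]) hcapfin).ne this
  exact ⟨μH[d] (cap e₀), hcappos, hcapfin.ne,
    fun v hv => hrot v hv e₀ he₀S, hSfin⟩

set_option maxHeartbeats 1000000 in
/-- Uniform upper bound for the maximum of the support function along the flow
(Lemma 4.1, upper bound): if `∫_{S^{n-1}} φ̃(h(·,t))/f dξ ≡ R` and
`h(ξ,t) ≥ ħ(t) (ξ_t·ξ)⁺`, then `ħ(t)` is bounded uniformly in `t`. -/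
theorem uniform_upper_bound_of_conserved_functional {n : ℕ} (hn : 2 ≤ n)
    (f : EuclideanSpace ℝ (Fin n) → ℝ)
    (hfc : ContinuousOn f (Metric.sphere (0 : EuclideanSpace ℝ (Fin n)) 1))
    (hfpos : ∀ ξ ∈ Metric.sphere (0 : EuclideanSpace ℝ (Fin n)) 1, 0 < f ξ)
    (φ : ℝ → ℝ) (hφc : ContinuousOn φ (Set.Ioi 0))
    (hφpos : ∀ s > (0:ℝ), 0 < φ s)
    (φt : ℝ → ℝ) (hφt : ∀ s > (0:ℝ), φt s = ∫ t in Set.Ioc 0 s, 1 / φ t)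
    (hφtop : Filter.Tendsto φt Filter.atTop Filter.atTop)
    (R : ℝ)
    (h : EuclideanSpace ℝ (Fin n) → ℝ → ℝ)
    (hpos : ∀ t ≥ (0:ℝ), ∀ ξ ∈ Metric.sphere (0 : EuclideanSpace ℝ (Fin n)) 1,
      0 < h ξ t)
    (hcont : ∀ t ≥ (0:ℝ),
      ContinuousOn (fun ξ => h ξ t) (Metric.sphere (0 : EuclideanSpace ℝ (Fin n)) 1))
    (hcons : ∀ t ≥ (0:ℝ),
      (∫ ξ in Metric.sphere (0 : EuclideanSpace ℝ (Fin n)) 1,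
        φt (h ξ t) / f ξ ∂(μH[(n : ℝ) - 1])) = R)
    (ξmax : ℝ → EuclideanSpace ℝ (Fin n))
    (hξmax : ∀ t ≥ (0:ℝ), ξmax t ∈ Metric.sphere (0 : EuclideanSpace ℝ (Fin n)) 1)
    (hmax : ∀ t ≥ (0:ℝ), ∀ ξ ∈ Metric.sphere (0 : EuclideanSpace ℝ (Fin n)) 1,
      h ξ t ≤ h (ξmax t) t)
    (hcone : ∀ t ≥ (0:ℝ), ∀ ξ ∈ Metric.sphere (0 : EuclideanSpace ℝ (Fin n)) 1,
      h (ξmax t) t * max ⟪ξmax t, ξ⟫ 0 ≤ h ξ t) :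
    ∃ L : ℝ, ∀ t ≥ (0:ℝ), h (ξmax t) t ≤ L := by
  classical
  set S : Set (EuclideanSpace ℝ (Fin n)) := Metric.sphere 0 1 with hSdef
  set d : ℝ := (n:ℝ) - 1 with hdd
  set μ : Measure (EuclideanSpace ℝ (Fin n)) := μH[d] with hμ
  obtain ⟨c, hcpos, hcfin, hcapm, hSfin⟩ := cap_lemma hn
  have hSmeas : MeasurableSet S := (Metric.isClosed_sphere).measurableSet
  have hScomp : IsCompact S := isCompact_sphere _ _
  have hSne : S.Nonempty := ⟨ξmax 0, hξmax 0 le_rfl⟩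
  -- φt is monotone and nonnegative on positive reals
  by_cases hInt : IntegrableOn (fun t => 1 / φ t) (Set.Ioc (0:ℝ) 1) volume
  swap
  · exfalso
    obtain ⟨s₀, hs₀⟩ := Filter.eventually_atTop.mp (hφtop.eventually_ge_atTop 1)
    have hs1 : (1:ℝ) ≤ φt (max s₀ 1) := hs₀ _ (le_max_left _ _)
    have : φt (max s₀ 1) = 0 := by
      rw [hφt _ (by positivity)]
      apply integral_undef
      intro h2
      exact hInt (IntegrableOn.mono_set h2
        (Set.Ioc_subset_Ioc le_rfl (le_max_right _ _)))
    linarith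
  have hIntOn : ∀ s > (0:ℝ), IntegrableOn (fun t => 1 / φ t) (Set.Ioc 0 s) volume := by
    intro s hs
    rcases le_or_gt s 1 with hs1 | hs1
    · exact hInt.mono_set (Set.Ioc_subset_Ioc le_rfl hs1)
    · have h1 : Set.Ioc (0:ℝ) 1 ∪ Set.Ioc 1 s = Set.Ioc 0 s :=
        Set.Ioc_union_Ioc_eq_Ioc (by norm_num) hs1.le
      rw [← h1]
      apply hInt.union
      have hctn : ContinuousOn (fun t => 1 / φ t) (Set.Icc 1 s) := by
        apply ContinuousOn.div continuousOn_const
          (hφc.mono (fun x hx => lt_of_lt_of_le one_pos hx.1))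
          (fun x hx => (hφpos x (lt_of_lt_of_le one_pos hx.1)).ne')
      exact (hctn.integrableOn_Icc).mono_set Set.Ioc_subset_Icc_self
  have hφnonneg : ∀ s > (0:ℝ), 0 ≤ φt s := by
    intro s hs
    rw [hφt s hs]
    apply setIntegral_nonneg measurableSet_Ioc
    intro x hx
    exact one_div_nonneg.mpr (hφpos x hx.1).le
  have hmono : ∀ a b : ℝ, 0 < a → a ≤ b → φt a ≤ φt b := by
    intro a b ha hab
    have hb : 0 < b := lt_of_lt_of_le ha hab
    rw [hφt a ha, hφt b hb]
    have hsplit : Set.Ioc (0:ℝ) a ∪ Set.Ioc a b = Set.Ioc 0 b :=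
      Set.Ioc_union_Ioc_eq_Ioc ha.le hab
    have hdisj : Disjoint (Set.Ioc (0:ℝ) a) (Set.Ioc a b) := Set.Ioc_disjoint_Ioc_of_le le_rfl
    have hint1 : IntegrableOn (fun t => 1 / φ t) (Set.Ioc 0 a) volume := hIntOn a ha
    have hint2 : IntegrableOn (fun t => 1 / φ t) (Set.Ioc a b) volume :=
      (hIntOn b hb).mono_set (Set.Ioc_subset_Ioc ha.le le_rfl)
    rw [← hsplit, setIntegral_union hdisj measurableSet_Ioc hint1 hint2]
    have : 0 ≤ ∫ t in Set.Ioc a b, 1 / φ t := by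
      apply setIntegral_nonneg measurableSet_Ioc
      intro x hx
      exact one_div_nonneg.mpr (hφpos x (lt_trans ha hx.1)).le
    linarith
  -- extrema of f on the sphere
  obtain ⟨zM, hzMS, hzM0⟩ := hScomp.exists_isMaxOn hSne hfc
  obtain ⟨zm, hzmS, hzm0⟩ := hScomp.exists_isMinOn hSne hfc
  set M : ℝ := f zM with hM
  set mf : ℝ := f zm with hmf
  have hzM : ∀ ξ ∈ S, f ξ ≤ M := fun ξ hξ => hzM0 hξ
  have hzm : ∀ ξ ∈ S, mf ≤ f ξ := fun ξ hξ => hzm0 hξ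
  have hMpos : 0 < M := hfpos zM hzMS
  have hmfpos : 0 < mf := hfpos zm hzmS
  -- constant from the cap lemma
  set γ : ℝ := c.toReal with hγ
  have hγpos : 0 < γ := ENNReal.toReal_pos hcpos.ne' hcfin
  set B : ℝ := R * M / γ with hB
  -- key inequality at each time
  have key : ∀ t ≥ (0:ℝ), φt (h (ξmax t) t / 2) ≤ B := by
    intro t ht
    set hb : ℝ := h (ξmax t) t with hhb
    have hhbpos : 0 < hb := hpos t ht _ (hξmax t ht)
    -- minimum of h over the sphere
    obtain ⟨w, hwS, hw0⟩ := hScomp.exists_isMinOn hSne (hcont t ht)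
    set m : ℝ := h w t with hm
    have hw : ∀ ξ ∈ S, m ≤ h ξ t := fun ξ hξ => hw0 hξ
    have hmpos : 0 < m := hpos t ht w hwS
    -- measurable monotone modification of φt
    set ψ : ℝ → ℝ := fun s => φt (max s m) with hψ
    have hψmono : Monotone ψ := by
      intro a b hab
      exact hmono _ _ (lt_of_lt_of_le hmpos (le_max_right _ _)) (max_le_max hab le_rfl)
    have hψmeas : Measurable ψ := hψmono.measurable
    set g : EuclideanSpace ℝ (Fin n) → ℝ := fun ξ => φt (h ξ t) / f ξ with hg
    have hgnonneg : ∀ ξ ∈ S, 0 ≤ g ξ := by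
      intro ξ hξ
      exact div_nonneg (hφnonneg _ (hpos t ht ξ hξ)) (hfpos ξ hξ).le
    have hgbound : ∀ ξ ∈ S, ‖g ξ‖ ≤ φt hb / mf := by
      intro ξ hξ
      rw [Real.norm_eq_abs, abs_of_nonneg (hgnonneg ξ hξ)]
      apply div_le_div₀ (hφnonneg hb hhbpos)
        (hmono _ _ (hpos t ht ξ hξ) (hmax t ht ξ hξ)) hmfpos (hzm ξ hξ)
    -- a.e. measurability of g on S
    have hhae : AEMeasurable (fun ξ => h ξ t) (μ.restrict S) :=
      (hcont t ht).aemeasurable hSmeas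
    have hfae : AEMeasurable f (μ.restrict S) := hfc.aemeasurable hSmeas
    have hgae : AEMeasurable g (μ.restrict S) := by
      have h1 : AEMeasurable (fun ξ => ψ (h ξ t) * (f ξ)⁻¹) (μ.restrict S) :=
        (hψmeas.comp_aemeasurable hhae).mul hfae.inv
      apply h1.congr
      filter_upwards [ae_restrict_mem hSmeas] with ξ hξ
      show φt (max (h ξ t) m) * (f ξ)⁻¹ = φt (h ξ t) / f ξ
      rw [max_eq_left (hw ξ hξ), div_eq_mul_inv]
    haveI : IsFiniteMeasure (μ.restrict S) := by
      constructor
      rw [Measure.restrict_apply_univ]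
      exact lt_of_le_of_ne le_top hSfin
    have hgint : IntegrableOn g S μ := by
      refine ⟨hgae.aestronglyMeasurable, ?_⟩
      apply HasFiniteIntegral.of_bounded (C := φt hb / mf)
      filter_upwards [ae_restrict_mem hSmeas] with ξ hξ
      exact hgbound ξ hξ
    -- the cap at ξmax t
    set C : Set (EuclideanSpace ℝ (Fin n)) := S ∩ {ξ | 1/2 ≤ ⟪ξmax t, ξ⟫} with hC
    have hCmeas : MeasurableSet C :=
      hSmeas.inter ((isClosed_le continuous_const
        (Continuous.inner continuous_const continuous_id)).measurableSet)
    have hCμ : μ C = c := hcapm (ξmax t) (hξmax t ht)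
    have step1 : (∫ ξ in C, g ξ ∂μ) ≤ R := by
      rw [← hcons t ht]
      exact setIntegral_mono_set hgint
        ((ae_restrict_mem hSmeas).mono (fun ξ hξ => hgnonneg ξ hξ))
        (Set.inter_subset_left).eventuallyLE
    have step2 : φt (hb / 2) / M * (μ C).toReal ≤ ∫ ξ in C, g ξ ∂μ := by
      apply setIntegral_ge_of_const_le_real hCmeas (by rw [hCμ]; exact hcfin)
      · intro ξ hξ
        obtain ⟨hξS, hξc⟩ := hξ
        have hhalf : hb / 2 ≤ h ξ t := by
          have h1 := hcone t ht ξ hξS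
          have h2 : (1:ℝ)/2 ≤ max ⟪ξmax t, ξ⟫ 0 := le_trans hξc (le_max_left _ _)
          nlinarith [hhbpos]
        apply div_le_div₀ (hφnonneg _ (hpos t ht ξ hξS))
          (hmono _ _ (by positivity) hhalf) (hfpos ξ hξS) (hzM ξ hξS)
      · exact hgint.mono_set Set.inter_subset_left
    have hCγ : (μ C).toReal = γ := by rw [hCμ]
    rw [hCγ] at step2
    rw [hB, le_div_iff₀ hγpos]
    calc φt (hb/2) * γ = (φt (hb/2) / M * γ) * M := by field_simp
      _ ≤ R * M := mul_le_mul_of_nonneg_right (le_trans step2 step1) hMpos.le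
  -- conclude using hφtop
  obtain ⟨s₀, hs₀⟩ := Filter.eventually_atTop.mp (hφtop.eventually_ge_atTop (B + 1))
  refine ⟨2 * max s₀ 1, ?_⟩
  intro t ht
  by_contra hcon
  push_neg at hcon
  have h1 : s₀ ≤ h (ξmax t) t / 2 := by
    have := le_max_left s₀ 1
    linarith
  have h2 := hs₀ _ h1
  have h3 := key t ht
  linarith
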